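/- Let ε = exp(2πi/7) and define the 3×3 complex matrices E₁ = (1/7)·[[1,1,1],[1,1,1],[1,1,1]], E₂ = (1/7)·[[1,ε⁶,ε²],[ε,1,ε³],[ε⁵,ε⁴,1]], E₃ = (1/7)·[[1,ε²,ε³],[ε⁵,1,ε],[ε⁴,ε⁶,1]], E₄ = (1/7)·[[1,ε⁴,ε⁶],[ε³,1,ε²],[ε,ε⁵,1]], and E₅, E₆, E₇ the entrywise complex conjugates of E₂, E₃, E₄ respectively. Then for each i ∈ {1,…,7} the matrix P_i = (7/3)·E_i is an orthogonal projection of rank one, i.e. P_i = P_i* = P_i² and Tr P_i = 1; in particular each E_i is positive semidefinite. -/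
import Mathlib

open Matrix

/-- `ε = exp(2πi/7)`. -/
noncomputable def eps : ℂ := Complex.exp (2 * Real.pi * Complex.I / 7)

/-- The seven matrices of the qutrit example of Section 6. -/
noncomputable def qutritPOVM : Fin 7 → Matrix (Fin 3) (Fin 3) ℂ :=
  ![(1 / 7 : ℂ) • !![1, 1, 1; 1, 1, 1; 1, 1, 1],
    (1 / 7 : ℂ) • !![1, eps ^ 6, eps ^ 2; eps, 1, eps ^ 3; eps ^ 5, eps ^ 4, 1],
    (1 / 7 : ℂ) • !![1, eps ^ 2, eps ^ 3; eps ^ 5, 1, eps; eps ^ 4, eps ^ 6, 1],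
    (1 / 7 : ℂ) • !![1, eps ^ 4, eps ^ 6; eps ^ 3, 1, eps ^ 2; eps, eps ^ 5, 1],
    ((1 / 7 : ℂ) • !![1, eps ^ 6, eps ^ 2; eps, 1, eps ^ 3; eps ^ 5, eps ^ 4, 1]).map (starRingEnd ℂ),
    ((1 / 7 : ℂ) • !![1, eps ^ 2, eps ^ 3; eps ^ 5, 1, eps; eps ^ 4, eps ^ 6, 1]).map (starRingEnd ℂ),
    ((1 / 7 : ℂ) • !![1, eps ^ 4, eps ^ 6; eps ^ 3, 1, eps ^ 2; eps, eps ^ 5, 1]).map (starRingEnd ℂ)]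

lemma eps_pow7 : eps ^ 7 = 1 := by
  rw [eps, ← Complex.exp_nat_mul]
  have : (7:ℕ) * (2 * Real.pi * Complex.I / 7) = 2 * Real.pi * Complex.I := by
    push_cast; ring
  rw [this, Complex.exp_two_pi_mul_I]

lemma eps_ne : eps ≠ 0 := Complex.exp_ne_zero _

lemma star_eps : (starRingEnd ℂ) eps = eps ^ 6 := by
  have h : (starRingEnd ℂ) eps * eps = 1 := by
    rw [eps, ← Complex.exp_conj, ← Complex.exp_add]
    have : (starRingEnd ℂ) (2 * Real.pi * Complex.I / 7) + 2 * Real.pi * Complex.I / 7 = 0 := by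
      simp only [map_div₀, _root_.map_mul, Complex.conj_I, Complex.conj_ofReal, map_ofNat]
      ring
    rw [this, Complex.exp_zero]
  have h7 := eps_pow7
  have h2 : ((starRingEnd ℂ) eps - eps ^ 6) * eps = 0 := by
    rw [sub_mul, h, ← pow_succ, h7, sub_self]
  rcases mul_eq_zero.mp h2 with h' | h'
  · exact sub_eq_zero.mp h'
  · exact absurd h' eps_ne

lemma e8 : eps ^ 8 = eps := by linear_combination eps * eps_pow7
lemma e9 : eps ^ 9 = eps ^ 2 := by linear_combination eps^2 * eps_pow7
lemma e10 : eps ^ 10 = eps ^ 3 := by linear_combination eps^3 * eps_pow7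
lemma e11 : eps ^ 11 = eps ^ 4 := by linear_combination eps^4 * eps_pow7
lemma e12 : eps ^ 12 = eps ^ 5 := by linear_combination eps^5 * eps_pow7
lemma e18 : eps ^ 18 = eps ^ 4 := by linear_combination (eps^11 + eps^4) * eps_pow7
lemma e24 : eps ^ 24 = eps ^ 3 := by linear_combination (eps^17 + eps^10 + eps^3) * eps_pow7
lemma e30 : eps ^ 30 = eps ^ 2 := by linear_combination (eps^23 + eps^16 + eps^9 + eps^2) * eps_pow7
lemma e36 : eps ^ 36 = eps := by linear_combination (eps^29 + eps^22 + eps^15 + eps^8 + eps) * eps_pow7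

open ComplexOrder in
lemma psd_smul_proj (P : Matrix (Fin 3) (Fin 3) ℂ) (hH : Pᴴ = P) (hM : P * P = P) :
    ((3 / 7 : ℂ) • P).PosSemidef := by
  have key : ((Real.sqrt (3/7) : ℂ) • P)ᴴ * ((Real.sqrt (3/7) : ℂ) • P) = (3/7 : ℂ) • P := by
    rw [conjTranspose_smul, smul_mul_assoc, mul_smul_comm, hH, hM, smul_smul]
    rw [Complex.star_def, Complex.conj_ofReal, ← Complex.ofReal_mul,
      Real.mul_self_sqrt (by norm_num)]
    norm_num
  rw [← key]
  exact posSemidef_conjTranspose_mul_self _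

lemma conj_proj (A : Matrix (Fin 3) (Fin 3) ℂ) (hH : Aᴴ = A) (hM : A * A = A)
    (ht : A.trace = 1) :
    (A.map (starRingEnd ℂ))ᴴ = A.map (starRingEnd ℂ) ∧
    A.map (starRingEnd ℂ) * A.map (starRingEnd ℂ) = A.map (starRingEnd ℂ) ∧
    (A.map (starRingEnd ℂ)).trace = 1 := by
  refine ⟨?_, ?_, ?_⟩
  · ext i j
    have := congrFun (congrFun hH j) i
    simp only [conjTranspose_apply, Matrix.map_apply] at this ⊢
    rw [← this]; simp
  · rw [← Matrix.map_mul, hM]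
  · have : (A.map (starRingEnd ℂ)).trace = (starRingEnd ℂ) A.trace := by
      simp [Matrix.trace, Matrix.diag, map_sum]
    rw [this, ht, RingHom.map_one]

lemma smul_map_conj (c : ℝ) (A : Matrix (Fin 3) (Fin 3) ℂ) :
    ((c : ℂ) • A).map (starRingEnd ℂ) = (c : ℂ) • A.map (starRingEnd ℂ) := by
  ext i j
  simp [Matrix.map_apply, Complex.conj_ofReal]

section Mats

noncomputable def M1 : Matrix (Fin 3) (Fin 3) ℂ := !![1, 1, 1; 1, 1, 1; 1, 1, 1]
noncomputable def M2 : Matrix (Fin 3) (Fin 3) ℂ :=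
  !![1, eps ^ 6, eps ^ 2; eps, 1, eps ^ 3; eps ^ 5, eps ^ 4, 1]
noncomputable def M3 : Matrix (Fin 3) (Fin 3) ℂ :=
  !![1, eps ^ 2, eps ^ 3; eps ^ 5, 1, eps; eps ^ 4, eps ^ 6, 1]
noncomputable def M4 : Matrix (Fin 3) (Fin 3) ℂ :=
  !![1, eps ^ 4, eps ^ 6; eps ^ 3, 1, eps ^ 2; eps, eps ^ 5, 1]

set_option maxHeartbeats 2000000

lemma H1 : ((1/3 : ℂ) • M1)ᴴ = (1/3 : ℂ) • M1 := by
  ext a b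
  fin_cases a <;> fin_cases b <;>
    simp [M1, conjTranspose_apply, map_pow, star_eps, Matrix.vecHead, Matrix.vecTail] <;>
    (try ring_nf) <;> (try simp only [e8, e9, e10, e11, e12, e18, e24, e30, e36, eps_pow7]) <;>
    (try ring_nf)

lemma H2 : ((1/3 : ℂ) • M2)ᴴ = (1/3 : ℂ) • M2 := by
  ext a b
  fin_cases a <;> fin_cases b <;>
    simp [M2, conjTranspose_apply, map_pow, star_eps, Matrix.vecHead, Matrix.vecTail] <;>
    (try ring_nf) <;> (try simp only [e8, e9, e10, e11, e12, e18, e24, e30, e36, eps_pow7]) <;>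
    (try ring_nf)

lemma H3 : ((1/3 : ℂ) • M3)ᴴ = (1/3 : ℂ) • M3 := by
  ext a b
  fin_cases a <;> fin_cases b <;>
    simp [M3, conjTranspose_apply, map_pow, star_eps, Matrix.vecHead, Matrix.vecTail] <;>
    (try ring_nf) <;> (try simp only [e8, e9, e10, e11, e12, e18, e24, e30, e36, eps_pow7]) <;>
    (try ring_nf)

lemma H4 : ((1/3 : ℂ) • M4)ᴴ = (1/3 : ℂ) • M4 := by
  ext a b
  fin_cases a <;> fin_cases b <;>
    simp [M4, conjTranspose_apply, map_pow, star_eps, Matrix.vecHead, Matrix.vecTail] <;>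
    (try ring_nf) <;> (try simp only [e8, e9, e10, e11, e12, e18, e24, e30, e36, eps_pow7]) <;>
    (try ring_nf)

lemma Mul1 : ((1/3 : ℂ) • M1) * ((1/3 : ℂ) • M1) = (1/3 : ℂ) • M1 := by
  ext a b
  fin_cases a <;> fin_cases b <;>
    simp [M1, Matrix.mul_apply, Fin.sum_univ_succ, Matrix.vecHead, Matrix.vecTail] <;>
    (try ring_nf) <;> (try simp only [e8, e9, e10, e11, e12, e18, e24, e30, e36, eps_pow7]) <;>
    (try ring_nf)

lemma Mul2 : ((1/3 : ℂ) • M2) * ((1/3 : ℂ) • M2) = (1/3 : ℂ) • M2 := by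
  ext a b
  fin_cases a <;> fin_cases b <;>
    simp [M2, Matrix.mul_apply, Fin.sum_univ_succ, Matrix.vecHead, Matrix.vecTail] <;>
    (try ring_nf) <;> (try simp only [e8, e9, e10, e11, e12, e18, e24, e30, e36, eps_pow7]) <;>
    (try ring_nf)

lemma Mul3 : ((1/3 : ℂ) • M3) * ((1/3 : ℂ) • M3) = (1/3 : ℂ) • M3 := by
  ext a b
  fin_cases a <;> fin_cases b <;>
    simp [M3, Matrix.mul_apply, Fin.sum_univ_succ, Matrix.vecHead, Matrix.vecTail] <;>
    (try ring_nf) <;> (try simp only [e8, e9, e10, e11, e12, e18, e24, e30, e36, eps_pow7]) <;>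
    (try ring_nf)

lemma Mul4 : ((1/3 : ℂ) • M4) * ((1/3 : ℂ) • M4) = (1/3 : ℂ) • M4 := by
  ext a b
  fin_cases a <;> fin_cases b <;>
    simp [M4, Matrix.mul_apply, Fin.sum_univ_succ, Matrix.vecHead, Matrix.vecTail] <;>
    (try ring_nf) <;> (try simp only [e8, e9, e10, e11, e12, e18, e24, e30, e36, eps_pow7]) <;>
    (try ring_nf)

lemma Tr1 : ((1/3 : ℂ) • M1).trace = 1 := by
  simp [M1, Matrix.trace, Matrix.diag, Fin.sum_univ_succ, Matrix.vecHead, Matrix.vecTail]; ring_nf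
lemma Tr2 : ((1/3 : ℂ) • M2).trace = 1 := by
  simp [M2, Matrix.trace, Matrix.diag, Fin.sum_univ_succ, Matrix.vecHead, Matrix.vecTail]; ring_nf
lemma Tr3 : ((1/3 : ℂ) • M3).trace = 1 := by
  simp [M3, Matrix.trace, Matrix.diag, Fin.sum_univ_succ, Matrix.vecHead, Matrix.vecTail]; ring_nf
lemma Tr4 : ((1/3 : ℂ) • M4).trace = 1 := by
  simp [M4, Matrix.trace, Matrix.diag, Fin.sum_univ_succ, Matrix.vecHead, Matrix.vecTail]; ring_nf

end Mats

open ComplexOrder in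
lemma main_of (E : Matrix (Fin 3) (Fin 3) ℂ) (A : Matrix (Fin 3) (Fin 3) ℂ)
    (hEA : (7 / 3 : ℂ) • E = A) (hH : Aᴴ = A) (hM : A * A = A) (ht : A.trace = 1) :
    ((7 / 3 : ℂ) • E)ᴴ = (7 / 3 : ℂ) • E ∧
    ((7 / 3 : ℂ) • E) * ((7 / 3 : ℂ) • E) = (7 / 3 : ℂ) • E ∧
    ((7 / 3 : ℂ) • E).trace = 1 ∧ E.PosSemidef := by
  rw [hEA]
  refine ⟨hH, hM, ht, ?_⟩
  have hE : E = (3 / 7 : ℂ) • A := by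
    rw [← hEA, smul_smul]; norm_num
  rw [hE]
  exact psd_smul_proj A hH hM


lemma hEA0 : (7 / 3 : ℂ) • qutritPOVM 0 = (1/3 : ℂ) • M1 := by
  rw [show qutritPOVM 0 = (1/7 : ℂ) • M1 from rfl, smul_smul]; norm_num
lemma hEA1 : (7 / 3 : ℂ) • qutritPOVM 1 = (1/3 : ℂ) • M2 := by
  rw [show qutritPOVM 1 = (1/7 : ℂ) • M2 from rfl, smul_smul]; norm_num
lemma hEA2 : (7 / 3 : ℂ) • qutritPOVM 2 = (1/3 : ℂ) • M3 := by
  rw [show qutritPOVM 2 = (1/7 : ℂ) • M3 from rfl, smul_smul]; norm_num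
lemma hEA3 : (7 / 3 : ℂ) • qutritPOVM 3 = (1/3 : ℂ) • M4 := by
  rw [show qutritPOVM 3 = (1/7 : ℂ) • M4 from rfl, smul_smul]; norm_num

lemma hEAconj (M : Matrix (Fin 3) (Fin 3) ℂ) :
    (7 / 3 : ℂ) • (((1/7 : ℂ) • M).map (starRingEnd ℂ)) = ((1/3 : ℂ) • M).map (starRingEnd ℂ) := by
  have h17 : ((1:ℂ)/7) = ((1/7 : ℝ) : ℂ) := by norm_num
  have h13 : ((1:ℂ)/3) = ((1/3 : ℝ) : ℂ) := by norm_num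
  rw [h17, h13, smul_map_conj, smul_map_conj, smul_smul]
  norm_num

lemma hEA4 : (7 / 3 : ℂ) • qutritPOVM 4 = ((1/3 : ℂ) • M2).map (starRingEnd ℂ) := by
  rw [show qutritPOVM 4 = ((1/7 : ℂ) • M2).map (starRingEnd ℂ) from rfl]; exact hEAconj M2
lemma hEA5 : (7 / 3 : ℂ) • qutritPOVM 5 = ((1/3 : ℂ) • M3).map (starRingEnd ℂ) := by
  rw [show qutritPOVM 5 = ((1/7 : ℂ) • M3).map (starRingEnd ℂ) from rfl]; exact hEAconj M3
lemma hEA6 : (7 / 3 : ℂ) • qutritPOVM 6 = ((1/3 : ℂ) • M4).map (starRingEnd ℂ) := by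
  rw [show qutritPOVM 6 = ((1/7 : ℂ) • M4).map (starRingEnd ℂ) from rfl]; exact hEAconj M4

open ComplexOrder in
/-- Each `P_i = (7/3)·E_i` is a rank-one orthogonal projection; in particular each `E_i`
is positive semidefinite. -/
theorem qutritPOVM_proj (i : Fin 7) :
    ((7 / 3 : ℂ) • qutritPOVM i)ᴴ = (7 / 3 : ℂ) • qutritPOVM i ∧
    ((7 / 3 : ℂ) • qutritPOVM i) * ((7 / 3 : ℂ) • qutritPOVM i) =
      (7 / 3 : ℂ) • qutritPOVM i ∧
    ((7 / 3 : ℂ) • qutritPOVM i).trace = 1 ∧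
    (qutritPOVM i).PosSemidef := by
  fin_cases i
  · exact main_of _ _ hEA0 H1 Mul1 Tr1
  · exact main_of _ _ hEA1 H2 Mul2 Tr2
  · exact main_of _ _ hEA2 H3 Mul3 Tr3
  · exact main_of _ _ hEA3 H4 Mul4 Tr4
  · exact main_of _ _ hEA4 (conj_proj _ H2 Mul2 Tr2).1 (conj_proj _ H2 Mul2 Tr2).2.1
      (conj_proj _ H2 Mul2 Tr2).2.2
  · exact main_of _ _ hEA5 (conj_proj _ H3 Mul3 Tr3).1 (conj_proj _ H3 Mul3 Tr3).2.1
      (conj_proj _ H3 Mul3 Tr3).2.2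
  · exact main_of _ _ hEA6 (conj_proj _ H4 Mul4 Tr4).1 (conj_proj _ H4 Mul4 Tr4).2.1
      (conj_proj _ H4 Mul4 Tr4).2.2
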